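/- arXiv:2501.02899 — 5 statements merged into one kernel-verified Lean document; each statement's English description precedes it below -/
import Mathlib

section
/- In the scalar case, define g_q(x) = Q + a²x − (1−q)a²b²x²/(R + b²x) for x ≥ 0, where a, b, Q, R > 0 and q ∈ [0,1). Then g_q is monotonically nondecreasing in x on [0, ∞) and monotonically nondecreasing in q. -/
/-- The scalar modified Riccati operator `g_q(x) = Q + a²x − (1−q)a²b²x²/(R+b²x)`
is monotone nondecreasing in `x` on `[0,∞)` and monotone nondecreasing in `q`. -/
theorem stmt_4 (a b Q R : ℝ)
    (ha : 0 < a) (hb : 0 < b) (hQ : 0 < Q) (hR : 0 < R) :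
    (∀ q ∈ Set.Ico (0:ℝ) 1,
      MonotoneOn (fun x : ℝ => Q + a^2*x - (1 - q) * (a^2*b^2*x^2/(R + b^2*x)))
        (Set.Ici 0))
    ∧ (∀ x : ℝ, 0 ≤ x → ∀ q ∈ Set.Ico (0:ℝ) 1, ∀ q' ∈ Set.Ico (0:ℝ) 1, q ≤ q' →
        Q + a^2*x - (1 - q) * (a^2*b^2*x^2/(R + b^2*x))
          ≤ Q + a^2*x - (1 - q') * (a^2*b^2*x^2/(R + b^2*x))) := by
  constructor
  · intro q hq x hx y hy hxy
    simp only [Set.mem_Ici] at hx hy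
    obtain ⟨hq0, hq1⟩ := hq
    have hD1 : 0 < R + b^2*x := by nlinarith
    have hD2 : 0 < R + b^2*y := by nlinarith
    simp only
    rw [← sub_nonneg]
    have hkey : (Q + a^2*y - (1 - q) * (a^2*b^2*y^2/(R + b^2*y)))
        - (Q + a^2*x - (1 - q) * (a^2*b^2*x^2/(R + b^2*x)))
        = (a^2 * (y - x) * (R^2 + q * b^2 * (R*(x+y) + b^2*x*y)))
          / ((R + b^2*x) * (R + b^2*y)) := by
      field_simp
      ring
    rw [hkey]
    apply div_nonneg _ (le_of_lt (mul_pos hD1 hD2))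
    have hyx : 0 ≤ y - x := by linarith
    have h2 : 0 ≤ R^2 + q * b^2 * (R*(x+y) + b^2*x*y) := by positivity
    positivity
  · intro x hx q hq q' hq' hqq
    have hD : 0 < R + b^2*x := by nlinarith
    have hfrac : 0 ≤ a^2*b^2*x^2/(R + b^2*x) := by positivity
    nlinarith [mul_nonneg (sub_nonneg.mpr hqq) hfrac]
end

section
/- Let a, b, Q, R > 0, and let 0 ≤ q̂ < q < 1 be such that the fixed-point equations P = g_q(P) and P̂ = g_{q̂}(P̂) have (unique) positive solutions, where g_s(x) = Q + a²x − (1−s)a²b²x²/(R + b²x). Then P̂ ≤ P. -/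
/-- Monotonicity of the positive solution of the scalar modified Riccati
equation in the packet loss rate: if `qhat < q` then `Phat ≤ P`. -/
theorem stmt_5 (a b Q R q qhat P Phat : ℝ)
    (ha : 0 < a) (hb : 0 < b) (hQ : 0 < Q) (hR : 0 < R)
    (hqhat0 : 0 ≤ qhat) (hlt : qhat < q) (hq1 : q < 1)
    (hP : 0 < P)
    (hPfix : P = Q + a^2*P - (1 - q) * (a^2*b^2*P^2/(R + b^2*P)))
    (hPuniq : ∀ x : ℝ, 0 < x →
      x = Q + a^2*x - (1 - q) * (a^2*b^2*x^2/(R + b^2*x)) → x = P)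
    (hPhat : 0 < Phat)
    (hPhatfix : Phat = Q + a^2*Phat - (1 - qhat) * (a^2*b^2*Phat^2/(R + b^2*Phat)))
    (hPhatuniq : ∀ x : ℝ, 0 < x →
      x = Q + a^2*x - (1 - qhat) * (a^2*b^2*x^2/(R + b^2*x)) → x = Phat) :
    Phat ≤ P := by
  set h : ℝ → ℝ := fun x => Q + a^2*x - (1 - qhat) * (a^2*b^2*x^2/(R + b^2*x)) - x
    with hh
  have hcont : ContinuousOn h (Set.Icc 0 P) := by
    apply ContinuousOn.sub
    apply ContinuousOn.sub
    · exact continuousOn_const.add (continuousOn_const.mul continuousOn_id)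
    · apply ContinuousOn.mul continuousOn_const
      apply ContinuousOn.div
      · fun_prop
      · fun_prop
      · intro x hx
        have : 0 ≤ x := hx.1
        positivity
    · exact continuousOn_id
  have h0 : h 0 = Q := by simp [hh]
  have hfP : 0 ≤ a^2*b^2*P^2/(R + b^2*P) := by positivity
  have hHP : h P ≤ 0 := by
    have : h P = P - (q - qhat) * (a^2*b^2*P^2/(R + b^2*P)) - P := by
      rw [hh]; simp only []
      nlinarith [hPfix]
    rw [this]
    nlinarith
  have hmem : (0:ℝ) ∈ Set.Icc (h P) (h 0) := ⟨hHP, by rw [h0]; exact hQ.le⟩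
  obtain ⟨c, hc, hc0⟩ := intermediate_value_Icc' hP.le hcont hmem
  have hcpos : 0 < c := by
    rcases lt_or_eq_of_le hc.1 with h' | h'
    · exact h'
    · exfalso; rw [← h'] at hc0; rw [h0] at hc0; linarith
  have hcfix : c = Q + a^2*c - (1 - qhat) * (a^2*b^2*c^2/(R + b^2*c)) := by
    have := hc0
    rw [hh] at this
    simp only [] at this
    linarith
  have := hPhatuniq c hcpos hcfix
  linarith [hc.2]
end

section
/- Let a, b, Q, R > 0 and q ∈ (0, 1/a²), and suppose P > 0 solves P = Q + a²P − (1−q)a²b²P²/(R + b²P). If 0 ≤ q − q̂ ≤ Q(R + b²P)/(a²b²P²) + (1−q)R/(R + b²P) and P̂ > 0 solves the same equation with q̂ in place of q, then Q + (1−q)R·(abP̂/(R + b²P̂))² + (q̂−q)a²b²P̂²/(R + b²P̂) > 0. -/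
set_option maxHeartbeats 2000000


/-- Scalar stability-threshold lower bound: if the estimation error `q - qhat`
is below the explicit threshold evaluated at `P`, the certainty-equivalence
stabilization criterion holds. -/
theorem stmt_6 (a b Q R q qhat P Phat : ℝ)
    (ha : 0 < a) (hb : 0 < b) (hQ : 0 < Q) (hR : 0 < R)
    (hq : q ∈ Set.Ioo (0:ℝ) (1/a^2))
    (hP : 0 < P)
    (hric : P = Q + a^2*P - (1 - q) * (a^2*b^2*P^2/(R + b^2*P)))
    (herr : 0 ≤ q - qhat)
    (herr2 : q - qhat ≤ Q*(R + b^2*P)/(a^2*b^2*P^2) + (1 - q)*R/(R + b^2*P))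
    (hPhat : 0 < Phat)
    (hrichat : Phat = Q + a^2*Phat - (1 - qhat) * (a^2*b^2*Phat^2/(R + b^2*Phat))) :
    0 < Q + (1 - q) * R * (a*b*Phat/(R + b^2*Phat))^2
        + (qhat - q) * (a^2*b^2*Phat^2/(R + b^2*Phat)) := by
  obtain ⟨hq0, hq1⟩ := hq
  have ha2 : (0:ℝ) < a^2 := by positivity
  have haq : a^2 * q < 1 := by
    have := (lt_div_iff₀ ha2).mp hq1
    linarith
  have hT : (0:ℝ) < R + b^2*P := by positivity
  have hS : (0:ℝ) < R + b^2*Phat := by positivity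
  have hTne : (R + b^2*P) ≠ 0 := ne_of_gt hT
  have hSne : (R + b^2*Phat) ≠ 0 := ne_of_gt hS
  have h1 : (0:ℝ) < 1 - a^2*q := by linarith
  -- cleared Riccati identities
  have E1 : b^2*(1-a^2*q)*P^2 + P*R*(1-a^2) - Q*b^2*P - Q*R = 0 := by
    field_simp at hric
    linear_combination hric
  have E2 : b^2*(1-a^2*qhat)*Phat^2 + Phat*R*(1-a^2) - Q*b^2*Phat - Q*R = 0 := by
    field_simp at hrichat
    linear_combination hrichat
  -- Phat ≤ P
  have hfac : (P - Phat) * (b^2*(1-a^2*q)*P*Phat + Q*R)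
      = a^2*b^2*(q-qhat)*P*Phat^2 := by
    linear_combination Phat * E1 - P * E2
  have hpos : (0:ℝ) < b^2*(1-a^2*q)*P*Phat + Q*R := by
    have : (0:ℝ) < b^2*(1-a^2*q)*P*Phat := by positivity
    nlinarith [mul_pos hQ hR]
  have hrhs : (0:ℝ) ≤ a^2*b^2*(q-qhat)*P*Phat^2 := by
    have h2 : (0:ℝ) ≤ (q-qhat)*P := mul_nonneg herr hP.le
    nlinarith [sq_nonneg (a*b*Phat)]
  have hPP : Phat ≤ P := by nlinarith [hfac, hpos, hrhs]
  -- threshold hypothesis, cleared of denominators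
  have hI1 : Q*(R+b^2*P)^2 + (1-q)*R*(a^2*b^2*P^2)
      = (R+b^2*P)*(b^2*(1-a^2*q)*P^2 + Q*R) := by
    linear_combination (-(b^2*P)) * E1
  have hRform : (Q*(R + b^2*P)/(a^2*b^2*P^2) + (1 - q)*R/(R + b^2*P))
      * (a^2*b^2*P^2*(R+b^2*P))
      = Q*(R+b^2*P)^2 + (1-q)*R*(a^2*b^2*P^2) := by
    field_simp
  have h4 : (q-qhat)*(a^2*b^2*P^2*(R+b^2*P))
      ≤ Q*(R+b^2*P)^2 + (1-q)*R*(a^2*b^2*P^2) := by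
    rw [← hRform]
    exact mul_le_mul_of_nonneg_right herr2 (by positivity)
  have H4' : (q-qhat)*(a^2*b^2*P^2) ≤ b^2*(1-a^2*q)*P^2 + Q*R := by
    rw [hI1] at h4
    have h4'' : ((q-qhat)*(a^2*b^2*P^2))*(R+b^2*P)
        ≤ (b^2*(1-a^2*q)*P^2 + Q*R)*(R+b^2*P) := by linarith [h4]
    exact le_of_mul_le_mul_right h4'' hT
  -- key positivity
  have step1 : (q-qhat)*(a^2*b^2*Phat^2)*R*P^2
      ≤ (b^2*(1-a^2*q)*P^2 + Q*R)*(R*Phat^2) := by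
    have := mul_le_mul_of_nonneg_right H4' (show (0:ℝ) ≤ R*Phat^2 by positivity)
    linarith [this]
  have step2 : Q*R*R*Phat^2 ≤ Q*R*R*P^2 := by
    have hsq : Phat^2 ≤ P^2 := by nlinarith [hPP, hPhat]
    have := mul_le_mul_of_nonneg_left hsq (show (0:ℝ) ≤ Q*R*R by positivity)
    linarith [this]
  have step3 : (q-qhat)*(a^2*b^2*Phat^2)*R*P^2
      ≤ (b^2*(1-a^2*q)*Phat^2 + Q*R)*R*P^2 := by linarith [step1, step2]
  have hY : (0:ℝ) < b^2*(1-a^2*q)*Phat^2 + Q*R := by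
    have h5 : (0:ℝ) < b^2*(1-a^2*q)*Phat^2 := by positivity
    nlinarith [mul_pos hQ hR]
  have hlt : ((q-qhat)*(a^2*b^2*Phat^2)*R)*P^2
      < ((R+b^2*Phat)*(b^2*(1-a^2*q)*Phat^2 + Q*R))*P^2 := by
    have h6 := mul_pos hY (show (0:ℝ) < b^2*Phat*P^2 by positivity)
    linarith [step3, h6]
  have step4 : (q-qhat)*(a^2*b^2*Phat^2)*R
      < (R+b^2*Phat)*(b^2*(1-a^2*q)*Phat^2 + Q*R) :=
    lt_of_mul_lt_mul_right hlt (sq_nonneg P)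
  have hN : (0:ℝ) < (R+b^2*Phat)*(b^2*(1-a^2*qhat)*Phat^2 + Q*R)
      - (q-qhat)*(a^2*b^2*Phat^2)*((R+b^2*Phat)+R) := by
    linarith [step4]
  -- convert goal
  have expand : (Q + (1 - q) * R * (a*b*Phat/(R + b^2*Phat))^2
        + (qhat - q) * (a^2*b^2*Phat^2/(R + b^2*Phat))) * (R + b^2*Phat)^2
      = Q*(R+b^2*Phat)^2 + (1-q)*R*(a*b*Phat)^2
        + (qhat-q)*(a^2*b^2*Phat^2)*(R+b^2*Phat) := by
    field_simp
  have hGN : (Q + (1 - q) * R * (a*b*Phat/(R + b^2*Phat))^2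
        + (qhat - q) * (a^2*b^2*Phat^2/(R + b^2*Phat))) * (R + b^2*Phat)^2
      = (R+b^2*Phat)*(b^2*(1-a^2*qhat)*Phat^2 + Q*R)
        - (q-qhat)*(a^2*b^2*Phat^2)*((R+b^2*Phat)+R) := by
    rw [expand]
    linear_combination (-(b^2*Phat)) * E2
  have hS2 : (0:ℝ) < (R + b^2*Phat)^2 := by positivity
  nlinarith [hGN, hN, hS2]
end

section
/- Suppose the scalar closed loop x_{t+1} = (a + λ_t b K̂)x_t with i.i.d. Bernoulli dropout (P(λ_t=0)=q) is mean-square stable, K̂ = −abP̂/(R + b²P̂), and P̂ > 0 solves P̂ = Q + a²P̂ − (1−q̂)a²b²P̂²/(R + b²P̂). Then the infinite-horizon cost J = E[Σ_{t≥0} Q x_t² + λ_t R K̂² x_t²] equals P̂·E[x_0²] + (q − q̂)·(a²b²P̂²/(R + b²P̂))·Σ_{t≥0} E[x_t²]. -/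
open MeasureTheory ProbabilityTheory Filter

/-- Scalar performance analysis: the infinite-horizon cost of the
certainty-equivalence controller decomposes as the Riccati value at the initial
state plus a correction proportional to the estimation error `q - qhat`. -/
theorem stmt_15 {Ω : Type*} [MeasurableSpace Ω] (μ : Measure Ω) [IsProbabilityMeasure μ]
    (a b Q R q qhat Phat K : ℝ)
    (ha : 0 < a) (hb : 0 < b) (hQ : 0 < Q) (hR : 0 < R)
    (hq : q ∈ Set.Ioo (0:ℝ) 1)
    (hPhat : 0 < Phat)
    (hric : Phat = Q + a^2*Phat - (1 - qhat) * (a^2*b^2*Phat^2/(R + b^2*Phat)))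
    (hK : K = -(a*b*Phat/(R + b^2*Phat)))
    (lam : ℕ → Ω → ℝ) (x : ℕ → Ω → ℝ)
    (hlam : ∀ t, Measurable (lam t)) (hx0 : Measurable (x 0))
    (hBern : ∀ t, ∀ᵐ ω ∂μ, lam t ω = 0 ∨ lam t ω = 1)
    (h0 : ∀ t, μ {ω | lam t ω = 0} = ENNReal.ofReal q)
    (hiid : iIndepFun lam μ)
    (hindep : ∀ t, IndepFun (lam t) (x t) μ)
    (hx0L2 : MemLp (x 0) 2 μ)
    (hdyn : ∀ t ω, x (t+1) ω = (a + lam t ω * b * K) * x t ω)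
    (hms : Tendsto (fun t => ∫ ω, (x t ω)^2 ∂μ) atTop (nhds 0)) :
    ∫ ω, (∑' t : ℕ, (Q * (x t ω)^2 + lam t ω * R * K^2 * (x t ω)^2)) ∂μ
      = Phat * (∫ ω, (x 0 ω)^2 ∂μ)
        + (q - qhat) * (a^2*b^2*Phat^2/(R + b^2*Phat)) * ∑' t : ℕ, ∫ ω, (x t ω)^2 ∂μ := by
  obtain ⟨hq0, hq1⟩ := hq
  have hM : (0:ℝ) < R + b^2*Phat := by positivity
  set S : ℕ → ℝ := fun t => ∫ ω, (x t ω)^2 ∂μ with hS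
  set ρ : ℝ := q*a^2 + (1-q)*(a+b*K)^2 with hρ
  set cstep : ℝ := Q + (1-q)*(R*K^2) with hcstep
  set cc : ℝ := a^2*b^2*Phat^2/(R + b^2*Phat) with hcc
  -- measurability of states
  have hxm : ∀ t, Measurable (x t) := by
    intro t
    induction t with
    | zero => exact hx0
    | succ t ih =>
      have h : x (t+1) = fun ω => (a + lam t ω * b * K) * x t ω := funext (hdyn t)
      rw [h]
      exact (measurable_const.add (((hlam t).mul_const b).mul_const K)).mul ih
  -- L² bounds
  have hL2 : ∀ t, MemLp (x t) 2 μ := by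
    intro t
    induction t with
    | zero => exact hx0L2
    | succ t ih =>
      have hC : MemLp (fun ω => (|a| + |b*K|) * x t ω) 2 μ := ih.const_mul _
      refine MemLp.of_le hC (hxm (t+1)).aestronglyMeasurable ?_
      filter_upwards [hBern t] with ω hω
      rw [hdyn t ω]
      simp only [norm_mul, Real.norm_eq_abs]
      have h1 : |a + lam t ω * b * K| ≤ |a| + |b*K| := by
        rcases hω with h | h
        · rw [h]; simp [abs_nonneg]; positivity
        · rw [h]; simpa [one_mul, mul_assoc] using abs_add_le a (b*K)
      have h2 : |a| + |b*K| ≤ |(|a| + |b*K|)| := le_abs_self _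
      exact mul_le_mul (h1.trans h2) le_rfl (abs_nonneg _) (abs_nonneg _)
  have hInt : ∀ t, Integrable (fun ω => (x t ω)^2) μ := fun t => (hL2 t).integrable_sq
  have hSnn : ∀ t, 0 ≤ S t := fun t => integral_nonneg fun ω => sq_nonneg _
  -- expectation of lam t is 1 - q
  have hElam : ∀ t, ∫ ω, lam t ω ∂μ = 1 - q := by
    intro t
    have hA : MeasurableSet {ω | lam t ω = 0} := (hlam t) (measurableSet_singleton 0)
    have hB : MeasurableSet {ω | lam t ω = 1} := (hlam t) (measurableSet_singleton 1)
    have hcong : lam t =ᵐ[μ] Set.indicator {ω | lam t ω = 1} (fun _ => (1:ℝ)) := by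
      filter_upwards [hBern t] with ω hω
      rcases hω with h | h
      · have hnot : ω ∉ {ω | lam t ω = 1} := by
          simp only [Set.mem_setOf_eq]
          rw [h]
          exact zero_ne_one
        rw [h, Set.indicator_of_notMem hnot]
      · rw [Set.indicator_of_mem (show ω ∈ {ω | lam t ω = 1} from h)]
        exact h
    have hcompl : μ ({ω | lam t ω = 0} ∪ {ω | lam t ω = 1})ᶜ = 0 := by
      have h1 := ae_iff.mp (hBern t)
      have h2 : ({ω | lam t ω = 0} ∪ {ω | lam t ω = 1})ᶜ
          = {ω | ¬(lam t ω = 0 ∨ lam t ω = 1)} := by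
        ext ω; simp [not_or]
      rw [h2]; exact h1
    have hdisj : Disjoint {ω | lam t ω = 0} {ω | lam t ω = 1} := by
      rw [Set.disjoint_left]
      intro ω h1 h2
      simp only [Set.mem_setOf_eq] at h1 h2
      exact zero_ne_one (h1 ▸ h2)
    have hUnion : μ ({ω | lam t ω = 0} ∪ {ω | lam t ω = 1}) = 1 := by
      have := measure_add_measure_compl (μ := μ) (hA.union hB)
      rw [hcompl, add_zero] at this
      rw [this, measure_univ]
    have hsum : ENNReal.ofReal q + μ {ω | lam t ω = 1} = 1 := by
      rw [← h0 t, ← measure_union hdisj hB, hUnion]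
    have hμB : μ {ω | lam t ω = 1} = ENNReal.ofReal (1 - q) := by
      have hle : ENNReal.ofReal q ≤ 1 := by
        rw [← ENNReal.ofReal_one]
        exact ENNReal.ofReal_le_ofReal hq1.le
      rw [ENNReal.ofReal_sub _ hq0.le, ENNReal.ofReal_one]
      rw [← hsum]
      rw [ENNReal.add_sub_cancel_left ENNReal.ofReal_ne_top]
    rw [integral_congr_ae hcong, integral_indicator_const _ hB, measureReal_def, hμB, smul_eq_mul, mul_one,
      ENNReal.toReal_ofReal (by linarith)]
  -- key computation with independence
  have hIlx : ∀ t, Integrable (fun ω => lam t ω * (x t ω)^2) μ := by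
    intro t
    refine (hInt t).mono' ((hlam t).mul ((hxm t).pow_const 2)).aestronglyMeasurable ?_
    filter_upwards [hBern t] with ω hω
    rcases hω with h | h <;> rw [h] <;> simp [sq_nonneg, abs_of_nonneg (sq_nonneg (x t ω))]
  have hkey : ∀ (t : ℕ) (c d : ℝ),
      ∫ ω, (c + lam t ω * d) * (x t ω)^2 ∂μ = (c + (1-q)*d) * S t := by
    intro t c d
    have hind : IndepFun (lam t) (fun ω => (x t ω)^2) μ :=
      (hindep t).comp measurable_id (measurable_id.pow_const 2)
    have hmul : ∫ ω, lam t ω * (x t ω)^2 ∂μ = (∫ ω, lam t ω ∂μ) * S t :=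
      hind.integral_fun_mul_eq_mul_integral (hlam t).aestronglyMeasurable
        ((hxm t).pow_const 2).aestronglyMeasurable
    have heq : (fun ω => (c + lam t ω * d) * (x t ω)^2)
        = fun ω => c * (x t ω)^2 + d * (lam t ω * (x t ω)^2) := by
      funext ω; ring
    rw [heq, integral_add ((hInt t).const_mul c) ((hIlx t).const_mul d),
      integral_const_mul, integral_const_mul, hmul, hElam t]
    show c * S t + d * ((1-q) * S t) = (c + (1-q)*d) * S t
    ring
  -- one step recursion
  have hstep : ∀ t, S (t+1) = ρ * S t := by
    intro t
    have hcong : (fun ω => (x (t+1) ω)^2)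
        =ᵐ[μ] fun ω => (a^2 + lam t ω * ((a+b*K)^2 - a^2)) * (x t ω)^2 := by
      filter_upwards [hBern t] with ω hω
      rw [hdyn t ω]
      rcases hω with h | h <;> rw [h] <;> ring
    have h1 : S (t+1) = ∫ ω, (a^2 + lam t ω * ((a+b*K)^2 - a^2)) * (x t ω)^2 ∂μ :=
      integral_congr_ae hcong
    rw [h1, hkey t (a^2) ((a+b*K)^2 - a^2), hρ]
    ring
  have hgeom : ∀ t, S t = ρ^t * S 0 := by
    intro t
    induction t with
    | zero => simp
    | succ t ih => rw [hstep t, ih, pow_succ]; ring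
  -- per-step cost
  have hf : ∀ t, Integrable (fun ω => Q * (x t ω)^2 + lam t ω * R * K^2 * (x t ω)^2) μ := by
    intro t
    have : (fun ω => Q * (x t ω)^2 + lam t ω * R * K^2 * (x t ω)^2)
        = fun ω => Q * (x t ω)^2 + (R*K^2) * (lam t ω * (x t ω)^2) := by
      funext ω; ring
    rw [this]
    exact ((hInt t).const_mul Q).add ((hIlx t).const_mul (R*K^2))
  have hfnn : ∀ t, ∀ᵐ ω ∂μ, 0 ≤ Q * (x t ω)^2 + lam t ω * R * K^2 * (x t ω)^2 := by
    intro t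
    filter_upwards [hBern t] with ω hω
    rcases hω with h | h <;> rw [h] <;> positivity
  have hcost : ∀ t, ∫ ω, (Q * (x t ω)^2 + lam t ω * R * K^2 * (x t ω)^2) ∂μ = cstep * S t := by
    intro t
    have : (fun ω => Q * (x t ω)^2 + lam t ω * R * K^2 * (x t ω)^2)
        = fun ω => (Q + lam t ω * (R*K^2)) * (x t ω)^2 := by
      funext ω; ring
    rw [this, hkey t Q (R*K^2)]
  have hnorm : ∀ t, ∫ ω, ‖Q * (x t ω)^2 + lam t ω * R * K^2 * (x t ω)^2‖ ∂μ = cstep * S t := by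
    intro t
    rw [← hcost t]
    refine integral_congr_ae ?_
    filter_upwards [hfnn t] with ω hω
    exact Real.norm_of_nonneg hω
  -- the algebraic identity from the Riccati equation
  have hiden : cstep = Phat * (1 - ρ) + (q - qhat) * cc := by
    have hQval : Q = Phat - a^2*Phat + (1 - qhat) * (a^2*b^2*Phat^2/(R + b^2*Phat)) := by
      linarith [hric]
    rw [hcstep, hρ, hcc, hQval, hK]
    field_simp
    ring
  -- summability and final scalar identity, by cases on S 0
  by_cases hS0 : S 0 = 0
  · -- degenerate case: everything vanishes
    have hSz : ∀ t, S t = 0 := fun t => by rw [hgeom t, hS0, mul_zero]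
    have hxz : ∀ t, ∀ᵐ ω ∂μ, (x t ω)^2 = 0 := by
      intro t
      have := (integral_eq_zero_iff_of_nonneg (fun ω => sq_nonneg (x t ω)) (hInt t)).mp (hSz t)
      filter_upwards [this] with ω hω
      exact hω
    have hall : ∀ᵐ ω ∂μ, ∀ t, (x t ω)^2 = 0 := ae_all_iff.mpr hxz
    have hLHS : ∫ ω, (∑' t : ℕ, (Q * (x t ω)^2 + lam t ω * R * K^2 * (x t ω)^2)) ∂μ = 0 := by
      have : (fun ω => ∑' t : ℕ, (Q * (x t ω)^2 + lam t ω * R * K^2 * (x t ω)^2))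
          =ᵐ[μ] fun _ => 0 := by
        filter_upwards [hall] with ω hω
        have : ∀ t : ℕ, Q * (x t ω)^2 + lam t ω * R * K^2 * (x t ω)^2 = 0 := by
          intro t; rw [hω t]; ring
        simp [this]
      rw [integral_congr_ae this, integral_zero]
    have hSfun : S = fun _ => (0:ℝ) := funext hSz
    rw [hLHS]
    show (0:ℝ) = Phat * S 0 + (q - qhat) * cc * ∑' t, S t
    rw [hSfun]
    simp
  · -- nondegenerate case: geometric decay
    have hS0pos : 0 < S 0 := lt_of_le_of_ne (hSnn 0) (Ne.symm hS0)
    have hρnn : 0 ≤ ρ := by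
      rw [hρ]
      exact add_nonneg (by positivity) (mul_nonneg (by linarith) (sq_nonneg _))
    have hρlt : ρ < 1 := by
      have htend : Tendsto (fun t => ρ^t * S 0) atTop (nhds 0) := by
        have : (fun t => ρ^t * S 0) = fun t => S t := by
          funext t; rw [hgeom t]
        rw [this]; exact hms
      have htend2 : Tendsto (fun t : ℕ => ρ^t) atTop (nhds 0) := by
        have : (fun t : ℕ => ρ^t) = fun t => (ρ^t * S 0) * (S 0)⁻¹ := by
          funext t; field_simp
        rw [this]
        simpa using htend.mul_const (S 0)⁻¹
      have := tendsto_pow_atTop_nhds_zero_iff.mp htend2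
      calc ρ ≤ |ρ| := le_abs_self ρ
      _ < 1 := this
    have hρne : (1:ℝ) - ρ ≠ 0 := by linarith
    have hsumgeo : Summable (fun t : ℕ => ρ^t) := summable_geometric_of_lt_one hρnn hρlt
    have hsumS : Summable S := by
      have : S = fun t => ρ^t * S 0 := funext hgeom
      rw [this]
      exact hsumgeo.mul_right (S 0)
    have htsumS : ∑' t, S t = (1 - ρ)⁻¹ * S 0 := by
      calc ∑' t, S t = ∑' t, ρ^t * S 0 := by exact tsum_congr fun t => hgeom t
      _ = (∑' t : ℕ, ρ^t) * S 0 := tsum_mul_right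
      _ = (1 - ρ)⁻¹ * S 0 := by rw [tsum_geometric_of_lt_one hρnn hρlt]
    have hsumnorm : Summable fun t => ∫ ω, ‖Q * (x t ω)^2 + lam t ω * R * K^2 * (x t ω)^2‖ ∂μ := by
      have : (fun t => ∫ ω, ‖Q * (x t ω)^2 + lam t ω * R * K^2 * (x t ω)^2‖ ∂μ)
          = fun t => cstep * S t := funext hnorm
      rw [this]
      exact hsumS.mul_left cstep
    have hinter : ∫ ω, (∑' t : ℕ, (Q * (x t ω)^2 + lam t ω * R * K^2 * (x t ω)^2)) ∂μ
        = ∑' t : ℕ, ∫ ω, (Q * (x t ω)^2 + lam t ω * R * K^2 * (x t ω)^2) ∂μ :=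
      (integral_tsum_of_summable_integral_norm hf hsumnorm).symm
    rw [hinter]
    have hcosts : ∑' t : ℕ, ∫ ω, (Q * (x t ω)^2 + lam t ω * R * K^2 * (x t ω)^2) ∂μ
        = cstep * ∑' t, S t := by
      rw [← tsum_mul_left]
      exact tsum_congr fun t => hcost t
    rw [hcosts]
    show cstep * ∑' t, S t = Phat * S 0 + (q - qhat) * cc * ∑' t, S t
    rw [htsumS, hiden]
    field_simp
end

section
/- Let a, b, Q, R > 0 with a² > 1 and q ∈ (0,1). If a positive real P solves P = Q + a²P − (1−q)a²b²P²/(R + b²P), then q < 1/a². -/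
/-- Existence of a positive solution to the scalar modified Riccati equation
forces the loss rate below the critical value `1/a²`. -/
theorem stmt_17 (a b Q R q P : ℝ)
    (ha : 0 < a) (hb : 0 < b) (hQ : 0 < Q) (hR : 0 < R)
    (ha2 : 1 < a^2) (hq : q ∈ Set.Ioo (0:ℝ) 1)
    (hP : 0 < P)
    (hric : P = Q + a^2*P - (1 - q) * (a^2*b^2*P^2/(R + b^2*P))) :
    q < 1/a^2 := by
  obtain ⟨hq0, hq1⟩ := hq
  have hden : 0 < R + b^2*P := by positivity
  have key : (P - Q - a^2*P) * (R + b^2*P) = -((1-q) * (a^2*b^2*P^2)) := by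
    field_simp at hric
    nlinarith [hric]
  rw [lt_div_iff₀ (by positivity)]
  by_contra h
  push_neg at h
  have h1 : (1 - q) * a^2 ≤ a^2 - 1 := by nlinarith
  have hb2P : 0 < b^2 * P^2 := by positivity
  nlinarith [key, mul_pos hP hR, mul_pos hQ hden, mul_pos hR hP,
    mul_le_mul_of_nonneg_right h1 (le_of_lt hb2P),
    mul_pos (mul_pos hP hR) (show (0:ℝ) < a^2 - 1 by linarith)]
end
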